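/- Let Δ ≥ 1, p ≥ 1, and r_i, r_j ≥ Δ with the convention h(x, priority) = (p+1)·⌈max(dist(x,s) − r_priority, 0)/Δ⌉ + p + 1 − priority. Suppose dist_G(u,s) > r_i and x is a node with dist_G(x,s) ≤ dist_G(u,s) − r_i, where x has priority j with r_j ≥ Δ. Then h(x,j) + 2 ≤ h(u,i). -/

import Mathlib

theorem stmt11 (Δ ri rj du dx : ℝ) (p i j : ℕ)
    (hΔ : 1 ≤ Δ) (hri : Δ ≤ ri) (hrj : Δ ≤ rj)
    (hp : 1 ≤ p) (hi : i ≤ p - 1) (hj : j ≤ p - 1)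
    (hdu : 0 ≤ du) (hdx : 0 ≤ dx)
    (hdu_gt : ri < du) (hdx_le : dx ≤ du - ri)
    (hu hx : ℝ)
    (hhu : hu = ((p : ℝ) + 1) * ((⌈max (du - ri) 0 / Δ⌉ : ℤ) : ℝ) + (p : ℝ) + 1 - (i : ℝ))
    (hhx : hx = ((p : ℝ) + 1) * ((⌈max (dx - rj) 0 / Δ⌉ : ℤ) : ℝ) + (p : ℝ) + 1 - (j : ℝ)) :
    hx + 2 ≤ hu := by
  have hΔ0 : (0:ℝ) < Δ := by linarith
  set cu : ℤ := ⌈max (du - ri) 0 / Δ⌉ with hcu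
  set cx : ℤ := ⌈max (dx - rj) 0 / Δ⌉ with hcx
  have key : cx + 1 ≤ cu := by
    by_cases hcase : Δ ≤ du - ri
    · have hmax : max (dx - rj) 0 ≤ max (du - ri) 0 - Δ := by
        rcases le_total (dx - rj) 0 with h | h
        · rw [max_eq_right h, max_eq_left (by linarith)]; linarith
        · rw [max_eq_left h, max_eq_left (by linarith)]; linarith
      have hdiv : max (dx - rj) 0 / Δ ≤ max (du - ri) 0 / Δ - 1 := by
        rw [div_sub' (ne_of_gt hΔ0)]
        exact div_le_div_of_nonneg_right (by linarith) hΔ0.le |>.trans_eq rfl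
      have := Int.ceil_mono hdiv
      rwa [show max (du - ri) 0 / Δ - 1 = max (du - ri) 0 / Δ - (1:ℤ) by push_cast; ring,
        Int.ceil_sub_intCast, ← hcu, le_sub_iff_add_le] at this
    · have hx0 : dx - rj < 0 := by linarith
      have hcx0 : cx = 0 := by
        rw [hcx, max_eq_right hx0.le, zero_div, Int.ceil_zero]
      have hcu1 : 0 < cu := by
        rw [hcu]
        apply Int.ceil_pos.mpr
        rw [max_eq_left (by linarith)]
        exact div_pos (by linarith) hΔ0
      omega
  have hkeyR : (cx : ℝ) + 1 ≤ (cu : ℝ) := by exact_mod_cast key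
  have hip : i + 1 ≤ p := by omega
  have hiR : (i : ℝ) + 1 ≤ (p : ℝ) := by exact_mod_cast hip
  have hjR : (0 : ℝ) ≤ (j : ℝ) := Nat.cast_nonneg j
  have hpR : (1 : ℝ) ≤ (p : ℝ) := by exact_mod_cast hp
  nlinarith [mul_le_mul_of_nonneg_left hkeyR (by linarith : (0:ℝ) ≤ (p:ℝ) + 1)]
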